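/- Let I₀, I₁, …, I_{n-1} be closed bounded intervals of ℝ and f continuous, such that f(I_i) ⊇ I_{i+1} for 0 ≤ i < n-1 and f(I_{n-1}) ⊇ I₀. Then there exists γ ∈ I₀ with f^n(γ) = γ and f^i(γ) ∈ I_i for all 0 ≤ i < n. -/

import Mathlib

open Set

/-- On an interval where `g u = p`, `g v = q`, `u ≤ v`, `p ≤ q`, there is a
subinterval mapping exactly onto `[p,q]`. -/
lemma shrink_aux (g : ℝ → ℝ) (hg : Continuous g) {u v p q : ℝ} (huv : u ≤ v) (hpq : p ≤ q)
    (hu : g u = p) (hv : g v = q) :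
    ∃ s t, u ≤ s ∧ s ≤ t ∧ t ≤ v ∧ g '' Set.Icc s t = Set.Icc p q := by
  set S : Set ℝ := Icc u v ∩ g ⁻¹' {p} with hS
  have hScpt : IsCompact S := isCompact_Icc.inter_right (isClosed_singleton.preimage hg)
  have hSne : S.Nonempty := ⟨u, ⟨le_refl u, huv⟩, hu⟩
  obtain ⟨hsS⟩ := hScpt.sSup_mem hSne
  set s := sSup S with hs
  have hsmem : s ∈ S := hScpt.sSup_mem hSne
  have hgs : g s = p := hsmem.2
  have hus : u ≤ s := hsmem.1.1
  have hsv : s ≤ v := hsmem.1.2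
  set T : Set ℝ := Icc s v ∩ g ⁻¹' {q} with hT
  have hTcpt : IsCompact T := isCompact_Icc.inter_right (isClosed_singleton.preimage hg)
  have hTne : T.Nonempty := ⟨v, ⟨hsv, le_refl v⟩, hv⟩
  set t := sInf T with ht
  have htmem : t ∈ T := hTcpt.sInf_mem hTne
  have hgt : g t = q := htmem.2
  have hst : s ≤ t := htmem.1.1
  have htv : t ≤ v := htmem.1.2
  refine ⟨s, t, hus, hst, htv, ?_⟩
  apply Subset.antisymm
  · rintro _ ⟨x, hx, rfl⟩
    constructor
    · by_contra hlt
      push_neg at hlt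
      have hxs : s < x := by
        rcases lt_or_eq_of_le hx.1 with h | h
        · exact h
        · rw [← h, hgs] at hlt; exact absurd hlt (lt_irrefl p)
      have : p ∈ Icc (g x) (g t) := ⟨hlt.le, hgt ▸ hpq⟩
      obtain ⟨y, hy, hgy⟩ := intermediate_value_Icc hx.2 hg.continuousOn this
      have hyS : y ∈ S := ⟨⟨hus.trans (hxs.le.trans hy.1), hy.2.trans htv⟩, hgy⟩
      exact absurd (le_csSup hScpt.bddAbove hyS) (not_le.mpr (hxs.trans_le hy.1))
    · by_contra hlt
      push_neg at hlt
      have hxt : x < t := by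
        rcases lt_or_eq_of_le hx.2 with h | h
        · exact h
        · rw [h, hgt] at hlt; exact absurd hlt (lt_irrefl q)
      have : q ∈ Icc (g s) (g x) := ⟨hgs ▸ hpq, hlt.le⟩
      obtain ⟨y, hy, hgy⟩ := intermediate_value_Icc hx.1 hg.continuousOn this
      have hyT : y ∈ T := ⟨⟨hy.1, (hy.2.trans hxt.le).trans htv⟩, hgy⟩
      exact absurd (csInf_le hTcpt.bddBelow hyT) (not_le.mpr ((hy.2.trans_lt hxt)))
  · have := intermediate_value_Icc hst hg.continuousOn
    rwa [hgs, hgt] at this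

lemma shrink (g : ℝ → ℝ) (hg : Continuous g) {c d p q : ℝ} (hpq : p ≤ q)
    (hsub : Set.Icc p q ⊆ g '' Set.Icc c d) :
    ∃ c' d', c ≤ c' ∧ c' ≤ d' ∧ d' ≤ d ∧ g '' Set.Icc c' d' = Set.Icc p q := by
  obtain ⟨u, hu, hgu⟩ := hsub (left_mem_Icc.mpr hpq)
  obtain ⟨v, hv, hgv⟩ := hsub (right_mem_Icc.mpr hpq)
  rcases le_total u v with huv | hvu
  · obtain ⟨s, t, h1, h2, h3, h4⟩ := shrink_aux g hg huv hpq hgu hgv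
    exact ⟨s, t, hu.1.trans h1, h2, h3.trans hv.2, h4⟩
  · obtain ⟨s, t, h1, h2, h3, h4⟩ :=
      shrink_aux (fun x => g (-x)) (hg.comp continuous_neg)
        (neg_le_neg hvu) hpq (by simp [hgu]) (by simp [hgv])
    have himg : g '' Set.Icc (-t) (-s) = Set.Icc p q := by
      rw [← h4]
      ext y
      simp only [mem_image, mem_Icc]
      constructor
      · rintro ⟨x, hx, rfl⟩
        exact ⟨-x, ⟨le_neg.mpr hx.2, neg_le.mp hx.1⟩, by simp⟩
      · rintro ⟨x, hx, rfl⟩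
        exact ⟨-x, ⟨neg_le_neg hx.2, neg_le_neg hx.1⟩, rfl⟩
    exact ⟨-t, -s, by linarith [hv.1], neg_le_neg h2, by linarith [hu.2], himg⟩

theorem itinerary_lemma (n : ℕ) (hn : 0 < n) (f : ℝ → ℝ) (hf : Continuous f)
    (a b : ℕ → ℝ) (hab : ∀ i < n, a i ≤ b i)
    (hcov : ∀ i < n, Set.Icc (a ((i + 1) % n)) (b ((i + 1) % n)) ⊆ f '' Set.Icc (a i) (b i)) :
    ∃ γ ∈ Set.Icc (a 0) (b 0), f^[n] γ = γ ∧
      ∀ i < n, f^[i] γ ∈ Set.Icc (a i) (b i) := by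
  have key : ∀ m ≤ n, ∃ c d, a 0 ≤ c ∧ c ≤ d ∧ d ≤ b 0 ∧
      f^[m] '' Set.Icc c d = Set.Icc (a (m % n)) (b (m % n)) ∧
      ∀ i < m, f^[i] '' Set.Icc c d ⊆ Set.Icc (a i) (b i) := by
    intro m
    induction m with
    | zero =>
      intro _
      exact ⟨a 0, b 0, le_refl _, hab 0 hn, le_refl _, by
        simp [Nat.zero_mod], fun i hi => absurd hi (Nat.not_lt_zero i)⟩
    | succ m ih =>
      intro hm1
      have hmn : m < n := hm1
      obtain ⟨c, d, hc, hcd, hd, himg, hall⟩ := ih hmn.le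
      rw [Nat.mod_eq_of_lt hmn] at himg
      have hcov' : Set.Icc (a ((m + 1) % n)) (b ((m + 1) % n)) ⊆ f^[m + 1] '' Set.Icc c d := by
        have := hcov m hmn
        rw [← himg, Set.image_image] at this
        simpa [Function.iterate_succ_apply'] using this
      have habm : a ((m + 1) % n) ≤ b ((m + 1) % n) :=
        hab _ (Nat.mod_lt _ hn)
      obtain ⟨c', d', h1, h2, h3, h4⟩ :=
        shrink (f^[m + 1]) (hf.iterate (m + 1)) habm hcov'
      refine ⟨c', d', hc.trans h1, h2, h3.trans hd, h4, ?_⟩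
      intro i hi
      have hsub : Set.Icc c' d' ⊆ Set.Icc c d := Set.Icc_subset_Icc h1 h3
      rcases Nat.lt_succ_iff_lt_or_eq.mp hi with hi | rfl
      · exact (Set.image_mono hsub).trans (hall i hi)
      · exact (Set.image_mono hsub).trans himg.subset
  obtain ⟨c, d, hc, hcd, hd, himg, hall⟩ := key n (le_refl n)
  rw [Nat.mod_self] at himg
  obtain ⟨x, hx, hfx⟩ := himg.symm.subset (Set.left_mem_Icc.mpr (hab 0 hn))
  obtain ⟨y, hy, hfy⟩ := himg.symm.subset (Set.right_mem_Icc.mpr (hab 0 hn))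
  set g : ℝ → ℝ := fun t => f^[n] t - t with hg
  have hgc : Continuous g := (hf.iterate n).sub continuous_id
  have hgx : g x ≤ 0 := by simp only [hg, hfx]; linarith [hx.1]
  have hgy : 0 ≤ g y := by simp only [hg, hfy]; linarith [hy.2]
  have h0 : (0 : ℝ) ∈ Set.uIcc (g x) (g y) := Set.mem_uIcc.mpr (Or.inl ⟨hgx, hgy⟩)
  obtain ⟨γ, hγ, hgγ⟩ := intermediate_value_uIcc hgc.continuousOn h0
  have hγcd : γ ∈ Set.Icc c d := Set.uIcc_subset_Icc hx hy hγ
  have hfix : f^[n] γ = γ := by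
    have : f^[n] γ - γ = 0 := hgγ
    linarith
  exact ⟨γ, Set.Icc_subset_Icc hc hd hγcd, hfix,
    fun i hi => hall i hi (Set.mem_image_of_mem _ hγcd)⟩
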